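/- Let K = ℂ³ with orthonormal basis k_1,k_2,k_3, let h = (k_1⊗k_1 + k_2⊗k_2 + k_3⊗k_3)/√3 ∈ K⊗K, and let P be the orthogonal projector onto the orthogonal complement h^⊥ of the line ℂh in K⊗K, i.e. P = id − |h⟩⟨h|. Then the subspace W_2 := ker P equals ℂh and has dimension 1, and the subspace W_3 := ker(P⊗id) ∩ ker(id⊗P) ⊆ K^{⊗3} is zero. -/

import Mathlib

open TensorProduct

set_option maxHeartbeats 2000000
set_option synthInstance.maxHeartbeats 1000000
set_option maxRecDepth 10000


/-- The pairing functional `w ↦ ⟨h, w⟩` on `K ⊗ K`, `K = ℂ³`, against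
`h = (1/√3) Σ_α k_α ⊗ k_α`; in coordinates `x ⊗ y ↦ (1/√3) Σ_α x_α y_α`. -/
noncomputable def hPairing :
    (Fin 3 → ℂ) ⊗[ℂ] (Fin 3 → ℂ) →ₗ[ℂ] ℂ :=
  ((Real.sqrt 3 : ℂ))⁻¹ • ∑ α : Fin 3,
    TensorProduct.lift ((LinearMap.mul ℂ ℂ).compl₁₂ (LinearMap.proj α) (LinearMap.proj α))

/-- The unit vector `h = (1/√3)(k₁⊗k₁ + k₂⊗k₂ + k₃⊗k₃) ∈ K ⊗ K`, `K = ℂ³`. -/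
noncomputable def hVec : (Fin 3 → ℂ) ⊗[ℂ] (Fin 3 → ℂ) :=
  ((Real.sqrt 3 : ℂ))⁻¹ • ∑ α : Fin 3, Pi.single α 1 ⊗ₜ[ℂ] Pi.single α 1

/-- The rank-one orthogonal projector `Q = |h⟩⟨h|` on `K ⊗ K`. -/
noncomputable def Qh :
    (Fin 3 → ℂ) ⊗[ℂ] (Fin 3 → ℂ) →ₗ[ℂ] (Fin 3 → ℂ) ⊗[ℂ] (Fin 3 → ℂ) :=
  (LinearMap.toSpanSingleton ℂ _ hVec) ∘ₗ hPairing

lemma csq : ((Real.sqrt 3 : ℂ))⁻¹ * ((Real.sqrt 3 : ℂ))⁻¹ = (3:ℂ)⁻¹ := by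
  rw [← mul_inv, ← Complex.ofReal_mul, Real.mul_self_sqrt (by norm_num)]
  norm_num

lemma pairing_tmul (x y : Fin 3 → ℂ) :
    hPairing (x ⊗ₜ[ℂ] y) = ((Real.sqrt 3 : ℂ))⁻¹ * ∑ α : Fin 3, x α * y α := by
  simp [hPairing, LinearMap.smul_apply, LinearMap.sum_apply, smul_eq_mul]

lemma pairing_hVec : hPairing hVec = 1 := by
  simp only [hVec, map_smul, map_sum, pairing_tmul, smul_eq_mul]
  rw [Fin.sum_univ_three]
  simp [Fin.sum_univ_three, Pi.single_apply]
  rw [mul_add, mul_add, csq]; ring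

lemma Qh_apply (w : (Fin 3 → ℂ) ⊗[ℂ] (Fin 3 → ℂ)) : Qh w = hPairing w • hVec := by
  simp [Qh, LinearMap.toSpanSingleton_apply]

/-- `A_{12} = A ⊗ id` on `K ⊗ (K ⊗ K)`, via the associator. -/
noncomputable def op12 {V : Type*} [AddCommGroup V] [Module ℂ V]
    (A : V ⊗[ℂ] V →ₗ[ℂ] V ⊗[ℂ] V) :
    V ⊗[ℂ] (V ⊗[ℂ] V) →ₗ[ℂ] V ⊗[ℂ] (V ⊗[ℂ] V) :=
  (TensorProduct.assoc ℂ V V V).toLinearMap ∘ₗ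
    (TensorProduct.map A LinearMap.id) ∘ₗ
      (TensorProduct.assoc ℂ V V V).symm.toLinearMap

/-- `A_{23} = id ⊗ A` on `K ⊗ (K ⊗ K)`. -/
noncomputable def op23 {V : Type*} [AddCommGroup V] [Module ℂ V]
    (A : V ⊗[ℂ] V →ₗ[ℂ] V ⊗[ℂ] V) :
    V ⊗[ℂ] (V ⊗[ℂ] V) →ₗ[ℂ] V ⊗[ℂ] (V ⊗[ℂ] V) :=
  TensorProduct.map LinearMap.id A

lemma op23_Qh_exists (w : (Fin 3 → ℂ) ⊗[ℂ] ((Fin 3 → ℂ) ⊗[ℂ] (Fin 3 → ℂ))) :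
    ∃ u, op23 Qh w = u ⊗ₜ[ℂ] hVec := by
  induction w using TensorProduct.induction_on with
  | zero => exact ⟨0, by rw [LinearMap.map_zero, zero_tmul]⟩
  | tmul x y =>
      refine ⟨hPairing y • x, ?_⟩
      simp [op23, Qh_apply, smul_tmul]
  | add a b ha hb =>
      obtain ⟨u, hu⟩ := ha; obtain ⟨v, hv⟩ := hb
      exact ⟨u + v, by simp [map_add, hu, hv, add_tmul]⟩


noncomputable def p0 : (Fin 3 → ℂ) ⊗[ℂ] (Fin 3 → ℂ) →ₗ[ℂ] ℂ :=
  ∑ α : Fin 3,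
    TensorProduct.lift ((LinearMap.mul ℂ ℂ).compl₁₂ (LinearMap.proj α) (LinearMap.proj α))

noncomputable def S : (Fin 3 → ℂ) ⊗[ℂ] (Fin 3 → ℂ) :=
  ∑ α : Fin 3, Pi.single α 1 ⊗ₜ[ℂ] Pi.single α 1

lemma hVec_eq : hVec = ((Real.sqrt 3 : ℂ))⁻¹ • S := rfl

lemma p0_tmul (x y : Fin 3 → ℂ) : p0 (x ⊗ₜ[ℂ] y) = ∑ α : Fin 3, x α * y α := by
  simp [p0, LinearMap.sum_apply]

lemma Qh_apply' (w : (Fin 3 → ℂ) ⊗[ℂ] (Fin 3 → ℂ)) :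
    Qh w = ((3:ℂ)⁻¹ * p0 w) • S := by
  have h1 : hPairing w = ((Real.sqrt 3 : ℂ))⁻¹ * p0 w := by
    simp [hPairing, p0, LinearMap.smul_apply, smul_eq_mul]
  rw [Qh_apply, h1, hVec_eq, smul_smul]
  congr 1
  rw [mul_comm ((Real.sqrt 3 : ℂ))⁻¹ (p0 w), mul_assoc, csq, mul_comm]

set_option maxRecDepth 10000 in
set_option maxHeartbeats 2000000 in
set_option synthInstance.maxHeartbeats 1000000 in
lemma keyS (u : Fin 3 → ℂ) :
    op23 Qh (op12 Qh (u ⊗ₜ[ℂ] S)) = (9:ℂ)⁻¹ • (u ⊗ₜ[ℂ] S) := by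
  have hu : u = ∑ α : Fin 3, u α • (Pi.single α 1 : Fin 3 → ℂ) := by
    ext β
    simp [Pi.single_apply, Finset.sum_apply, mul_comm]
  conv_rhs => rw [hu]
  simp only [S, op12, op23, map_smul, map_sum, tmul_sum, sum_tmul, tmul_smul, ← smul_tmul',
    LinearMap.coe_comp, Function.comp_apply, LinearEquiv.coe_coe, assoc_symm_tmul, map_tmul,
    LinearMap.id_apply, assoc_tmul, Qh_apply', p0_tmul, smul_smul, Finset.smul_sum,
    Fin.sum_univ_three, Pi.single_apply, tmul_add, add_tmul, map_add, smul_add]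
  norm_num [Fin.ext_iff]
  module

lemma key (u : Fin 3 → ℂ) :
    op23 Qh (op12 Qh (u ⊗ₜ[ℂ] hVec)) = (9:ℂ)⁻¹ • (u ⊗ₜ[ℂ] hVec) := by
  rw [hVec_eq, tmul_smul, map_smul, map_smul, keyS, smul_comm]

lemma op12_sub_apply (w : (Fin 3 → ℂ) ⊗[ℂ] ((Fin 3 → ℂ) ⊗[ℂ] (Fin 3 → ℂ))) :
    op12 (LinearMap.id - Qh) w = w - op12 Qh w := by
  have hr : ∀ v : ((Fin 3 → ℂ) ⊗[ℂ] (Fin 3 → ℂ)) ⊗[ℂ] (Fin 3 → ℂ),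
      TensorProduct.map (LinearMap.id - Qh) (LinearMap.id : (Fin 3 → ℂ) →ₗ[ℂ] (Fin 3 → ℂ)) v
        = v - TensorProduct.map Qh (LinearMap.id : (Fin 3 → ℂ) →ₗ[ℂ] (Fin 3 → ℂ)) v := by
    intro v
    have h := LinearMap.congr_fun
      (LinearMap.rTensor_sub (Q := Fin 3 → ℂ)
        (LinearMap.id : (Fin 3 → ℂ) ⊗[ℂ] (Fin 3 → ℂ) →ₗ[ℂ] (Fin 3 → ℂ) ⊗[ℂ] (Fin 3 → ℂ)) Qh) v
    simp only [LinearMap.sub_apply, LinearMap.rTensor_id, LinearMap.id_apply] at h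
    exact h
  simp only [op12, LinearMap.coe_comp, Function.comp_apply, LinearEquiv.coe_coe]
  rw [hr, map_sub, LinearEquiv.apply_symm_apply]

lemma op23_sub_apply (w : (Fin 3 → ℂ) ⊗[ℂ] ((Fin 3 → ℂ) ⊗[ℂ] (Fin 3 → ℂ))) :
    op23 (LinearMap.id - Qh) w = w - op23 Qh w := by
  have h := LinearMap.congr_fun
    (LinearMap.lTensor_sub (M := Fin 3 → ℂ)
      (LinearMap.id : (Fin 3 → ℂ) ⊗[ℂ] (Fin 3 → ℂ) →ₗ[ℂ] (Fin 3 → ℂ) ⊗[ℂ] (Fin 3 → ℂ)) Qh) w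
  simp only [LinearMap.sub_apply, LinearMap.lTensor_id, LinearMap.id_apply] at h
  exact h

lemma hVec_ne_zero : hVec ≠ 0 := by
  intro h
  have := pairing_hVec
  rw [h, map_zero] at this
  exact one_ne_zero this.symm

/-- For `P = id − |h⟩⟨h|` on `K ⊗ K` with `K = ℂ³` and `h` the normalized maximally
entangled vector, `W₂ = ker P = ℂ·h` is one-dimensional and
`W₃ = ker(P ⊗ id) ∩ ker(id ⊗ P) ⊆ K^{⊗3}` is zero. -/
theorem stmt_9 (P : (Fin 3 → ℂ) ⊗[ℂ] (Fin 3 → ℂ) →ₗ[ℂ] (Fin 3 → ℂ) ⊗[ℂ] (Fin 3 → ℂ))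
    (hP : P = LinearMap.id - Qh) :
    LinearMap.ker P = Submodule.span ℂ {hVec} ∧
    Module.finrank ℂ (LinearMap.ker P) = 1 ∧
    LinearMap.ker (op12 P) ⊓ LinearMap.ker (op23 P) = ⊥ := by
  subst hP
  have hker : LinearMap.ker (LinearMap.id - Qh) = Submodule.span ℂ {hVec} := by
    apply le_antisymm
    · intro w hw
      rw [LinearMap.mem_ker, LinearMap.sub_apply, LinearMap.id_apply, sub_eq_zero] at hw
      rw [Submodule.mem_span_singleton]
      exact ⟨hPairing w, by rw [← Qh_apply, ← hw]⟩
    · rw [Submodule.span_le, Set.singleton_subset_iff]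
      rw [SetLike.mem_coe, LinearMap.mem_ker, LinearMap.sub_apply, LinearMap.id_apply,
        Qh_apply, pairing_hVec, one_smul, sub_self]
  refine ⟨hker, ?_, ?_⟩
  · rw [hker, finrank_span_singleton hVec_ne_zero]
  · rw [Submodule.eq_bot_iff]
    intro w hw
    rw [Submodule.mem_inf, LinearMap.mem_ker, LinearMap.mem_ker] at hw
    obtain ⟨h1, h2⟩ := hw
    rw [op12_sub_apply, sub_eq_zero] at h1
    rw [op23_sub_apply, sub_eq_zero] at h2
    obtain ⟨u, hu⟩ := op23_Qh_exists w
    have hw' : w = u ⊗ₜ[ℂ] hVec := h2.trans hu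
    have hself : w = (9:ℂ)⁻¹ • w := by
      calc w = op23 Qh w := h2
        _ = op23 Qh (op12 Qh w) := by rw [← h1]
        _ = op23 Qh (op12 Qh (u ⊗ₜ[ℂ] hVec)) := by rw [← hw']
        _ = (9:ℂ)⁻¹ • (u ⊗ₜ[ℂ] hVec) := key u
        _ = (9:ℂ)⁻¹ • w := by rw [← hw']
    have h0 : ((1:ℂ) - (9:ℂ)⁻¹) • w = 0 := by
      rw [sub_smul (1:ℂ) (9:ℂ)⁻¹ w, one_smul, ← hself, sub_self]
    rcases smul_eq_zero.mp h0 with hc | hw0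
    · exact absurd hc (by norm_num)
    · exact hw0
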